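/- Let n ≥ 2 and let ε = e^{2πi/n} be a primitive n-th root of unity. If 1 ≤ i, j ≤ n satisfy ε^{i−1}(ε + 1) = ε^{j−1} + 1, then either (j = 2 and i = 1) or (j = n and i = n). -/

import Mathlib

open Complex

lemma re_eq_of_abs_eq (z w : ℂ) (hz : ‖z‖ = 1) (hw : ‖w‖ = 1)
    (h : ‖z + 1‖ = ‖w + 1‖) : z.re = w.re := by
  have h1 : Complex.normSq (z + 1) = Complex.normSq (w + 1) := by
    rw [← Complex.sq_norm, ← Complex.sq_norm, h]
  have h2 : Complex.normSq z = 1 := by rw [← Complex.sq_norm, hz]; norm_num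
  have h3 : Complex.normSq w = 1 := by rw [← Complex.sq_norm, hw]; norm_num
  simp [Complex.normSq_apply, Complex.add_re, Complex.add_im] at h1 h2 h3
  nlinarith [h1, h2, h3]

lemma cos_key (n b : ℕ) (hn : 2 ≤ n) (hb : b < n)
    (h : Real.cos (2 * Real.pi * b / n) = Real.cos (2 * Real.pi / n)) :
    b = 1 ∨ b = n - 1 := by
  have hπ := Real.pi_pos
  have hn0 : (0:ℝ) < n := by positivity
  have hcast : (2:ℝ) ≤ n := by exact_mod_cast hn
  have hy1 : 0 < 2 * Real.pi / n := by positivity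
  have hy2 : 2 * Real.pi / n ≤ Real.pi := by
    rw [div_le_iff₀ hn0]
    nlinarith [mul_le_mul_of_nonneg_left hcast hπ.le]
  have hx0 : 0 ≤ 2 * Real.pi * b / n := by positivity
  have hx2 : 2 * Real.pi * b / n < 2 * Real.pi := by
    rw [div_lt_iff₀ hn0]
    have hbn : (b:ℝ) < n := by exact_mod_cast hb
    nlinarith [mul_lt_mul_of_pos_left hbn hπ]
  by_cases hx : 2 * Real.pi * b / n ≤ Real.pi
  · left
    have heq := Real.injOn_cos ⟨hx0, hx⟩ ⟨le_of_lt hy1, hy2⟩ h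
    field_simp at heq
    exact_mod_cast heq
  · right
    push_neg at hx
    have hcos2 : Real.cos (2 * Real.pi - 2 * Real.pi * b / n) = Real.cos (2 * Real.pi / n) := by
      rw [Real.cos_two_pi_sub]; exact h
    have heq := Real.injOn_cos ⟨by linarith, by linarith⟩ ⟨le_of_lt hy1, hy2⟩ hcos2
    field_simp at heq
    have h2π : (2 * Real.pi) ≠ 0 := by positivity
    have hnb : 2 * Real.pi * ((n:ℝ) - b) = 2 * Real.pi * 1 := by rw [heq]
    have hnb2 : (n:ℝ) - b = 1 := mul_left_cancel₀ h2π hnb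
    have : (b:ℝ) = ((n - 1 : ℕ) : ℝ) := by
      push_cast [Nat.cast_sub (by omega : 1 ≤ n)]; linarith
    exact_mod_cast this

/-- for ε = e^{2πi/n} a primitive n-th root of unity (n ≥ 2) and
1 ≤ i, j ≤ n, the equation ε^{i−1}(ε+1) = ε^{j−1}+1 forces (j = 2 and i = 1) or
(j = n and i = n). -/
theorem root_of_unity_equation (n : ℕ) (hn : 2 ≤ n) (ε : ℂ)
    (hε : ε = Complex.exp (2 * Real.pi * Complex.I / n))
    (i j : ℕ) (hi1 : 1 ≤ i) (hin : i ≤ n) (hj1 : 1 ≤ j) (hjn : j ≤ n)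
    (h : ε ^ (i - 1) * (ε + 1) = ε ^ (j - 1) + 1) :
    (j = 2 ∧ i = 1) ∨ (j = n ∧ i = n) := by
  have hπ := Real.pi_pos
  by_cases hn2 : n = 2
  · subst hn2
    have hεv : ε = -1 := by
      rw [hε, show (2 * (Real.pi:ℂ) * Complex.I / (2:ℕ)) = Real.pi * Complex.I by
        push_cast; ring]
      exact Complex.exp_pi_mul_I
    subst hεv
    interval_cases i <;> interval_cases j <;> revert h <;> norm_num
  · have hn3 : 3 ≤ n := by omega
    have hε' : ε = Complex.exp (((2 * Real.pi / n : ℝ) : ℂ) * Complex.I) := by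
      rw [hε]; congr 1; push_cast; ring
    have prim : IsPrimitiveRoot ε n := by
      rw [hε]; exact Complex.isPrimitiveRoot_exp n (by omega)
    have habsε : ‖ε‖ = 1 := by
      rw [hε']; exact Complex.norm_exp_ofReal_mul_I _
    have hpowk : ∀ k : ℕ, ε ^ k = Complex.exp (((2 * Real.pi * k / n : ℝ) : ℂ) * Complex.I) := by
      intro k
      rw [hε', ← Complex.exp_nat_mul]
      congr 1; push_cast; ring
    have habspow : ∀ k : ℕ, ‖ε ^ k‖ = 1 := by
      intro k; rw [hpowk k]; exact Complex.norm_exp_ofReal_mul_I _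
    have hne : ε + 1 ≠ 0 := by
      intro hcon
      have him : ε.im = Real.sin (2 * Real.pi / n) := by
        rw [hε', Complex.exp_ofReal_mul_I_im]
      have hpos : 0 < Real.sin (2 * Real.pi / n) := by
        apply Real.sin_pos_of_pos_of_lt_pi
        · positivity
        · rw [div_lt_iff₀ (by positivity : (0:ℝ) < n)]
          have hcast : (3:ℝ) ≤ n := by exact_mod_cast hn3
          nlinarith [mul_le_mul_of_nonneg_left hcast hπ.le]
      have hεm : ε = -1 := eq_neg_of_add_eq_zero_left hcon
      rw [hεm] at him
      simp at him
      linarith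
    have habseq : ‖ε + 1‖ = ‖ε ^ (j-1) + 1‖ := by
      calc ‖ε + 1‖ = ‖ε ^ (i-1)‖ * ‖ε + 1‖ := by
            rw [habspow]; ring
        _ = ‖ε ^ (i-1) * (ε + 1)‖ := (norm_mul _ _).symm
        _ = ‖ε ^ (j-1) + 1‖ := by rw [h]
    have hre : ε.re = (ε ^ (j-1)).re :=
      re_eq_of_abs_eq ε (ε ^ (j-1)) habsε (habspow _) habseq
    have hcos : Real.cos (2 * Real.pi * (j-1 : ℕ) / n) = Real.cos (2 * Real.pi / n) := by
      have h1 : (ε ^ (j-1)).re = Real.cos (2 * Real.pi * (j-1:ℕ) / n) := by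
        rw [hpowk (j-1), Complex.exp_ofReal_mul_I_re]
      have h2 : ε.re = Real.cos (2 * Real.pi / n) := by
        rw [hε', Complex.exp_ofReal_mul_I_re]
      rw [← h1, ← h2, hre]
    have hj2n : j = 2 ∨ j = n := by
      rcases cos_key n (j-1) hn (by omega) hcos with h' | h' <;> omega
    rcases hj2n with hj | hj
    · left
      refine ⟨hj, ?_⟩
      subst hj
      simp only [show (2:ℕ) - 1 = 1 from rfl, pow_one] at h
      have hpow1 : ε ^ (i-1) = 1 :=
        mul_right_cancel₀ hne (h.trans (one_mul (ε+1)).symm)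
      have hdvd : n ∣ (i-1) := (prim.pow_eq_one_iff_dvd (i-1)).mp hpow1
      have h0 : i - 1 = 0 := Nat.eq_zero_of_dvd_of_lt hdvd (by omega)
      omega
    · right
      refine ⟨hj, ?_⟩
      rw [hj] at h
      have hεn : ε ^ n = 1 := prim.pow_eq_one
      have hstep : ε ^ i * (ε + 1) = 1 * (ε + 1) := by
        have e1 : ε * (ε ^ (i-1) * (ε + 1)) = ε ^ i * (ε + 1) := by
          rw [← mul_assoc, ← pow_succ']
          congr 2
          omega
        have e2 : ε * (ε ^ (n-1) + 1) = 1 * (ε + 1) := by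
          have hh : ε * ε ^ (n-1) = ε ^ n := by
            rw [← pow_succ']
            congr 1
            omega
          rw [mul_add, hh, hεn]; ring
        rw [← e1, h, e2]
      have hpowi : ε ^ i = 1 := mul_right_cancel₀ hne hstep
      have hdvd : n ∣ i := (prim.pow_eq_one_iff_dvd i).mp hpowi
      have := Nat.le_of_dvd (by omega) hdvd
      omega
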